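/- Let G(x) = ∑_{i=0}^s a_i x^i be a polynomial with coefficients in F_q, q = 2^m, of binary degree d (the maximum over i with a_i ≠ 0 of the sum of binary digits of i), and let f = Tr ∘ G where Tr : F_{2^m} → F_2 is the trace. Then every value f̂(v) = ∑_{x ∈ F_q} (-1)^(Tr(G(x)) + Tr(vx)) of the Walsh transform is divisible by 2^(⌈m/d⌉). -/

import Mathlib

open Finset Polynomial

private lemma mm_neg_one_pow_add (a b : ZMod 2) :
    ((-1 : ℤ)) ^ ((a + b).val) = (-1) ^ a.val * (-1) ^ b.val := by revert a b; decide

private lemma mm_neg_one_pow_sum {σ : Type*} (s : Finset σ) (g : σ → ZMod 2) :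
    (-1 : ℤ) ^ ((∑ t ∈ s, g t).val) = ∏ t ∈ s, (-1 : ℤ) ^ (g t).val := by
  induction s using Finset.cons_induction with
  | empty => simp
  | cons a s ha ih => rw [Finset.sum_cons, Finset.prod_cons, mm_neg_one_pow_add, ih]

private lemma mm_val_mul (a b : ZMod 2) : (((a * b).val : ℤ)) = (a.val : ℤ) * b.val := by revert a b; decide

private lemma mm_val_prod {σ : Type*} (s : Finset σ) (g : σ → ZMod 2) :
    (((∏ t ∈ s, g t).val : ℤ)) = ∏ t ∈ s, ((g t).val : ℤ) := by
  induction s using Finset.cons_induction with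
  | empty => simp [ZMod.val_one]
  | cons a s ha ih => rw [Finset.prod_cons, Finset.prod_cons, mm_val_mul, ih]

private lemma mm_neg_one_pow_val (a : ZMod 2) :
    (-1 : ℤ) ^ a.val = 1 - 2 * (a.val : ℤ) := by revert a; decide

private lemma mm_prod_union_idem {ι M : Type*} [DecidableEq ι] [CommMonoid M]
    (v : ι → M) (hv : ∀ j, v j * v j = v j) (A B : Finset ι) :
    (∏ j ∈ A, v j) * ∏ j ∈ B, v j = ∏ j ∈ A ∪ B, v j := by
  rw [← Finset.prod_union_inter]
  have h1 : (∏ j ∈ A ∩ B, v j) * ∏ j ∈ A ∩ B, v j = ∏ j ∈ A ∩ B, v j := by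
    rw [← Finset.prod_mul_distrib]; exact Finset.prod_congr rfl fun j _ => hv j
  have h2 : A ∩ B ⊆ A ∪ B := (Finset.inter_subset_left).trans Finset.subset_union_left
  rw [← Finset.prod_sdiff h2]
  rw [mul_assoc, h1]

private lemma mm_prod_biUnion_idem {ι σ : Type*} [DecidableEq ι] [DecidableEq σ]
    (v : ι → ℤ) (hv : ∀ j, v j * v j = v j) (U : Finset σ) (T : σ → Finset ι) :
    ∏ t ∈ U, ∏ j ∈ T t, v j = ∏ j ∈ U.biUnion T, v j := by
  induction U using Finset.cons_induction with
  | empty => simp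
  | cons a U ha ih =>
      rw [Finset.prod_cons, ih, Finset.cons_eq_insert, Finset.biUnion_insert,
        mm_prod_union_idem v hv]

/-- Counting: the sum over all `c : Fin m → ZMod 2` of the 0/1 product over `V`. -/
private lemma mm_sum_prod_val {m : ℕ} (V : Finset (Fin m)) :
    ∑ c : Fin m → ZMod 2, ∏ j ∈ V, (((c j).val : ℤ)) = 2 ^ (m - V.card) := by
  classical
  have h1 : ∀ c : Fin m → ZMod 2, (∏ j ∈ V, (((c j).val : ℤ)))
      = ∏ j : Fin m, (if j ∈ V then ((c j).val : ℤ) else 1) := by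
    intro c
    rw [Finset.prod_ite_mem, Finset.univ_inter]
  simp_rw [h1]
  have h2 : ∑ c : Fin m → ZMod 2, ∏ j : Fin m, (if j ∈ V then ((c j).val : ℤ) else 1)
      = ∏ j : Fin m, ∑ b : ZMod 2, (if j ∈ V then ((b).val : ℤ) else 1) := by
    rw [Finset.prod_univ_sum]
    rw [Fintype.piFinset_univ]
  rw [h2]
  have h3 : ∀ j : Fin m, (∑ b : ZMod 2, (if j ∈ V then ((b).val : ℤ) else 1))
      = if j ∈ V then 1 else 2 := by
    intro j
    by_cases hj : j ∈ V <;> simp [hj, Finset.sum_ite_eq]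
    · decide
  simp_rw [h3]
  rw [← Finset.prod_sdiff (Finset.subset_univ V)]
  have : ∀ j ∈ V, (if j ∈ V then (1:ℤ) else 2) = 1 := fun j hj => by simp [hj]
  rw [Finset.prod_congr rfl this, Finset.prod_const_one, mul_one]
  have : ∀ j ∈ Finset.univ \ V, (if j ∈ V then (1:ℤ) else 2) = 2 := by
    intro j hj; simp only [Finset.mem_sdiff] at hj; simp [hj.2]
  rw [Finset.prod_congr rfl this, Finset.prod_const, Finset.card_sdiff_of_subset (Finset.subset_univ V),
    Finset.card_univ, Fintype.card_fin]

/-- The key combinatorial divisibility lemma. -/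
private lemma mm_key (m d : ℕ) (hm : 0 < m) (hd : 0 < d) {n : ℕ}
    (T : Fin n → Finset (Fin m)) (w : Fin n → ZMod 2) (hT : ∀ t, (T t).card ≤ d) :
    (2 : ℤ) ^ ((m + d - 1) / d) ∣
      ∑ c : Fin m → ZMod 2, (-1 : ℤ) ^ (∑ t, w t * ∏ j ∈ T t, c j).val := by
  classical
  set C := (m + d - 1) / d with hC
  have hdC : d * C ≤ m + d - 1 := by
    rw [hC, mul_comm]; exact Nat.div_mul_le_self _ _
  -- rewrite each summand
  have hsummand : ∀ c : Fin m → ZMod 2,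
      (-1 : ℤ) ^ (∑ t, w t * ∏ j ∈ T t, c j).val
        = ∏ t : Fin n, (1 - 2 * (((w t).val : ℤ) * ∏ j ∈ T t, ((c j).val : ℤ))) := by
    intro c
    rw [mm_neg_one_pow_sum]
    refine Finset.prod_congr rfl fun t _ => ?_
    rw [mm_neg_one_pow_val, mm_val_mul, mm_val_prod]
  simp_rw [hsummand]
  have hexpand : ∀ c : Fin m → ZMod 2,
      (∏ t : Fin n, (1 - 2 * (((w t).val : ℤ) * ∏ j ∈ T t, ((c j).val : ℤ))))
        = ∑ U ∈ (Finset.univ : Finset (Fin n)).powerset,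
            ∏ t ∈ U, (-(2 * (((w t).val : ℤ) * ∏ j ∈ T t, ((c j).val : ℤ)))) := by
    intro c
    have : ∀ t : Fin n, (1 - 2 * (((w t).val : ℤ) * ∏ j ∈ T t, ((c j).val : ℤ)))
        = (-(2 * (((w t).val : ℤ) * ∏ j ∈ T t, ((c j).val : ℤ)))) + 1 := by intro t; ring
    simp_rw [this]
    rw [Finset.prod_add]
    refine Finset.sum_congr rfl fun U hU => by simp
  simp_rw [hexpand]
  rw [Finset.sum_comm]
  refine Finset.dvd_sum fun U hU => ?_
  -- compute the inner sum for fixed U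
  have hterm : ∀ c : Fin m → ZMod 2,
      (∏ t ∈ U, (-(2 * (((w t).val : ℤ) * ∏ j ∈ T t, ((c j).val : ℤ)))))
        = ((-2) ^ U.card * ∏ t ∈ U, ((w t).val : ℤ)) *
            ∏ j ∈ U.biUnion T, ((c j).val : ℤ) := by
    intro c
    have : ∀ t ∈ U, (-(2 * (((w t).val : ℤ) * ∏ j ∈ T t, ((c j).val : ℤ))))
        = (-2) * (((w t).val : ℤ)) * ∏ j ∈ T t, ((c j).val : ℤ) := by intro t _; ring
    rw [Finset.prod_congr rfl this, Finset.prod_mul_distrib, Finset.prod_mul_distrib,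
      Finset.prod_const]
    rw [mm_prod_biUnion_idem _ (fun j => by
      rcases (show ∀ a : ZMod 2, a.val = 0 ∨ a.val = 1 by decide) (c j) with h | h <;>
        simp [h])]
  simp_rw [hterm]
  rw [← Finset.mul_sum, mm_sum_prod_val]
  set k := U.card with hk
  set V := (U.biUnion T).card with hV
  have hV1 : V ≤ m := by
    rw [hV]
    exact le_trans (Finset.card_le_univ _) (by simp)
  have hV2 : V ≤ d * k := by
    rw [hV]
    refine le_trans Finset.card_biUnion_le ?_
    calc ∑ t ∈ U, (T t).card ≤ ∑ _t ∈ U, d := Finset.sum_le_sum fun t _ => hT t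
    _ = k * d := by rw [Finset.sum_const, smul_eq_mul]
    _ = d * k := mul_comm _ _
  have hCk : C ≤ k + (m - V) := by
    rcases le_or_gt C k with h | h
    · omega
    · have hC1 : 1 ≤ C := by
        rw [hC]
        rw [Nat.one_le_div_iff hd]
        omega
      have h3 : (d - 1) * k ≤ (d - 1) * (C - 1) := Nat.mul_le_mul_left _ (by omega)
      have e1 : (d - 1) * k = d * k - k := by rw [Nat.sub_one_mul]
      have ek : k ≤ d * k := Nat.le_mul_of_pos_left k hd
      have e2 : (d - 1) * (C - 1) = d * (C - 1) - (C - 1) := by rw [Nat.sub_one_mul]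
      have e3 : d * (C - 1) = d * C - d := by rw [Nat.mul_sub_one d C]
      have eC : C - 1 ≤ d * (C - 1) := Nat.le_mul_of_pos_left _ hd
      have ed : d ≤ d * C := Nat.le_mul_of_pos_right d hC1
      omega
  refine dvd_trans (pow_dvd_pow 2 hCk) ?_
  rw [pow_add]
  have heq : ((-2:ℤ)) ^ k * (∏ t ∈ U, ((w t).val : ℤ)) * 2 ^ (m - V)
      = ((-1:ℤ) ^ k * ∏ t ∈ U, ((w t).val : ℤ)) * (2 ^ k * 2 ^ (m - V)) := by
    rw [show ((-2:ℤ)) = -1 * 2 by norm_num, mul_pow]; ring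
  rw [heq]
  exact dvd_mul_left _ _


section KRep

variable {m : ℕ} {K : Type*} [CommRing K] [Algebra (ZMod 2) K]

/-- `ψ` is representable as a `K`-linear combination of multilinear monomials of degree `≤ e`
in the `ZMod 2` coordinates. -/
private def KRep (e : ℕ) (ψ : (Fin m → ZMod 2) → K) : Prop :=
  ∃ (n : ℕ) (T : Fin n → Finset (Fin m)) (u : Fin n → K),
    (∀ t, (T t).card ≤ e) ∧
    ∀ c, ψ c = ∑ t, u t * ∏ j ∈ T t, algebraMap (ZMod 2) K (c j)

private lemma KRep.congr {e : ℕ} {ψ ψ' : (Fin m → ZMod 2) → K} (h : KRep e ψ)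
    (h' : ∀ c, ψ c = ψ' c) : KRep e ψ' := by
  obtain ⟨n, T, u, h1, h2⟩ := h
  exact ⟨n, T, u, h1, fun c => (h' c).symm.trans (h2 c)⟩

private lemma KRep.mono {e e' : ℕ} (hee : e ≤ e') {ψ : (Fin m → ZMod 2) → K}
    (h : KRep e ψ) : KRep e' ψ := by
  obtain ⟨n, T, u, h1, h2⟩ := h
  exact ⟨n, T, u, fun t => (h1 t).trans hee, h2⟩

private lemma KRep.const (e : ℕ) (y : K) : KRep e (fun _ : Fin m → ZMod 2 => y) := by
  refine ⟨1, fun _ => ∅, fun _ => y, by simp, fun c => by simp⟩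

private lemma KRep.add {e : ℕ} {ψ₁ ψ₂ : (Fin m → ZMod 2) → K}
    (h₁ : KRep e ψ₁) (h₂ : KRep e ψ₂) : KRep e (fun c => ψ₁ c + ψ₂ c) := by
  obtain ⟨n₁, T₁, u₁, hc₁, hr₁⟩ := h₁
  obtain ⟨n₂, T₂, u₂, hc₂, hr₂⟩ := h₂
  refine ⟨n₁ + n₂, Fin.addCases T₁ T₂, Fin.addCases u₁ u₂, ?_, ?_⟩
  · intro t
    refine Fin.addCases (fun i => ?_) (fun i => ?_) t <;> simp [hc₁, hc₂]
  · intro c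
    rw [Fin.sum_univ_add]
    simp only [Fin.addCases_left, Fin.addCases_right]
    rw [hr₁, hr₂]

private lemma KRep.mul {e₁ e₂ : ℕ} {ψ₁ ψ₂ : (Fin m → ZMod 2) → K}
    (h₁ : KRep e₁ ψ₁) (h₂ : KRep e₂ ψ₂) : KRep (e₁ + e₂) (fun c => ψ₁ c * ψ₂ c) := by
  classical
  obtain ⟨n₁, T₁, u₁, hc₁, hr₁⟩ := h₁
  obtain ⟨n₂, T₂, u₂, hc₂, hr₂⟩ := h₂
  refine ⟨n₁ * n₂,
    fun t => T₁ (finProdFinEquiv.symm t).1 ∪ T₂ (finProdFinEquiv.symm t).2,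
    fun t => u₁ (finProdFinEquiv.symm t).1 * u₂ (finProdFinEquiv.symm t).2, ?_, ?_⟩
  · intro t
    refine le_trans (Finset.card_union_le _ _) (Nat.add_le_add (hc₁ _) (hc₂ _))
  · intro c
    show ψ₁ c * ψ₂ c = _
    rw [hr₁, hr₂, Finset.sum_mul_sum]
    rw [← finProdFinEquiv.sum_comp (M := K)]
    rw [Fintype.sum_prod_type]
    refine Finset.sum_congr rfl fun a _ => Finset.sum_congr rfl fun b _ => ?_
    simp only [Equiv.symm_apply_apply]
    rw [← mm_prod_union_idem (fun j => algebraMap (ZMod 2) K (c j))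
      (fun j => by
        rw [← map_mul]
        congr 1
        revert c
        exact fun c => (show ∀ a : ZMod 2, a * a = a by decide) (c j))]
    ring

private lemma KRep.sum {σ : Type*} (s : Finset σ) (e : ℕ) (ψ : σ → (Fin m → ZMod 2) → K)
    (h : ∀ k ∈ s, KRep e (ψ k)) :
    KRep e (fun c => ∑ k ∈ s, ψ k c) := by
  induction s using Finset.cons_induction with
  | empty => simpa using KRep.const e 0
  | cons a s ha ih =>
      have := (h a (Finset.mem_cons_self a s)).add
        (ih (fun k hk => h k (Finset.mem_cons_of_mem hk)))
      exact this.congr fun c => (Finset.sum_cons (f := fun k => ψ k c) ha).symm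

private lemma KRep.prod {σ : Type*} (s : Finset σ) (e : σ → ℕ) (ψ : σ → (Fin m → ZMod 2) → K)
    (h : ∀ k ∈ s, KRep (e k) (ψ k)) :
    KRep (∑ k ∈ s, e k) (fun c => ∏ k ∈ s, ψ k c) := by
  induction s using Finset.cons_induction with
  | empty => simpa using KRep.const 0 1
  | cons a s ha ih =>
      rw [Finset.sum_cons]
      have := (h a (Finset.mem_cons_self a s)).mul
        (ih (fun k hk => h k (Finset.mem_cons_of_mem hk)))
      exact this.congr fun c => (Finset.prod_cons (f := fun k => ψ k c) ha).symm

end KRep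

private lemma mm_sum_digits (n : ℕ) : (Nat.digits 2 n).sum = n.bitIndices.length := by
  induction n using Nat.strong_induction_on with
  | _ n ih =>
    rcases Nat.eq_zero_or_pos n with h0 | h0
    · subst h0; simp
    have h2 : n / 2 < n := Nat.div_lt_self h0 one_lt_two
    have hd : Nat.digits 2 n = n % 2 :: Nat.digits 2 (n / 2) :=
      Nat.digits_def' (by norm_num) h0
    rw [hd, List.sum_cons, ih _ h2]
    rcases Nat.even_or_odd n with he | ho
    · obtain ⟨k, hk⟩ := he
      have hn : n = 2 * k := by omega
      subst hn
      rw [Nat.bitIndices_two_mul, List.length_map]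
      have : 2 * k / 2 = k := by omega
      rw [this]
      omega
    · obtain ⟨k, hk⟩ := ho
      subst hk
      rw [Nat.bitIndices_two_mul_add_one, List.length_cons, List.length_map]
      have : (2 * k + 1) / 2 = k := by omega
      rw [this]
      omega

private lemma zmod2_pow_pos (a : ZMod 2) {n : ℕ} (hn : n ≠ 0) : a ^ n = a := by
  rcases (show ∀ a : ZMod 2, a = 0 ∨ a = 1 by decide) a with h | h <;> subst h
  · exact zero_pow hn
  · exact one_pow n

section Field

variable {m : ℕ} {K : Type*} [CommRing K] [Algebra (ZMod 2) K] [CharP K 2]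
  [Fact (Nat.Prime 2)]

/-- The `2^k`-th power of a "linear" function is representable with degree-1 monomials. -/
private lemma KRep_pow_two_pow (b : Fin m → K) (k : ℕ) :
    KRep 1 (fun c : Fin m → ZMod 2 =>
      (∑ j, algebraMap (ZMod 2) K (c j) * b j) ^ 2 ^ k) := by
  refine ⟨m, fun j => {j}, fun j => b j ^ 2 ^ k, by simp, fun c => ?_⟩
  show (∑ j, algebraMap (ZMod 2) K (c j) * b j) ^ 2 ^ k = _
  rw [sum_pow_char_pow]
  refine Finset.sum_congr rfl fun j _ => ?_
  rw [Finset.prod_singleton, mul_pow, ← map_pow,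
    zmod2_pow_pos (c j) (by positivity), mul_comm]

/-- `x ↦ x^i` composed with the linear substitution is representable with
degree-`σ(i)` monomials. -/
private lemma KRep_pow (b : Fin m → K) (i : ℕ) :
    KRep ((Nat.digits 2 i).sum)
      (fun c : Fin m → ZMod 2 => (∑ j, algebraMap (ZMod 2) K (c j) * b j) ^ i) := by
  classical
  set L := i.bitIndices with hL
  have hnd : L.Nodup := Nat.bitIndices_sorted.nodup
  have hsum : ∑ k ∈ L.toFinset, 2 ^ k = i := by
    rw [List.sum_toFinset _ hnd, Nat.twoPowSum_bitIndices]
  have hcard : L.toFinset.card = (Nat.digits 2 i).sum := by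
    rw [List.toFinset_card_of_nodup hnd, mm_sum_digits]
  have hrep := KRep.prod (K := K) L.toFinset (fun _ => 1)
    (fun k c => (∑ j, algebraMap (ZMod 2) K (c j) * b j) ^ 2 ^ k)
    (fun k _ => KRep_pow_two_pow b k)
  have hrep' := hrep.congr (ψ' := fun c =>
      (∑ j, algebraMap (ZMod 2) K (c j) * b j) ^ i) (fun c => ?_)
  · refine hrep'.mono ?_ |>.congr fun c => rfl
    rw [Finset.sum_const, smul_eq_mul, mul_one, hcard]
  · rw [Finset.prod_pow_eq_pow_sum, hsum]

/-- Evaluation of a polynomial of binary degree `≤ d` at the linear substitution. -/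
private lemma KRep_eval (hd : 0 < d) (b : Fin m → K) (H : Polynomial K)
    (hH : ∀ i, H.coeff i ≠ 0 → (Nat.digits 2 i).sum ≤ d) :
    KRep d (fun c : Fin m → ZMod 2 =>
      H.eval (∑ j, algebraMap (ZMod 2) K (c j) * b j)) := by
  classical
  have heval : ∀ x : K, H.eval x = ∑ i ∈ Finset.range (H.natDegree + 1), H.coeff i * x ^ i :=
    fun x => Polynomial.eval_eq_sum_range x
  have hrep : ∀ i ∈ Finset.range (H.natDegree + 1),
      KRep d (fun c : Fin m → ZMod 2 =>
        H.coeff i * (∑ j, algebraMap (ZMod 2) K (c j) * b j) ^ i) := by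
    intro i _
    by_cases hi : H.coeff i = 0
    · exact (KRep.const d 0).congr fun c => by rw [hi, zero_mul]
    · have := (KRep.const 0 (H.coeff i)).mul (KRep_pow b i)
      rw [zero_add] at this
      exact this.mono (hH i hi)
  exact (KRep.sum _ d _ hrep).congr fun c => (heval _).symm

end Field

private lemma mm_trace_rep {m d : ℕ} {K : Type*} [CommRing K] [Algebra (ZMod 2) K]
    {ψ : (Fin m → ZMod 2) → K} (h : KRep d ψ) :
    ∃ (n : ℕ) (T : Fin n → Finset (Fin m)) (w : Fin n → ZMod 2),
      (∀ t, (T t).card ≤ d) ∧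
      ∀ c, Algebra.trace (ZMod 2) K (ψ c) = ∑ t, w t * ∏ j ∈ T t, c j := by
  obtain ⟨n, T, u, hc, hr⟩ := h
  refine ⟨n, T, fun t => Algebra.trace (ZMod 2) K (u t), hc, fun c => ?_⟩
  rw [hr, map_sum]
  refine Finset.sum_congr rfl fun t _ => ?_
  rw [← map_prod, mul_comm, ← Algebra.smul_def, map_smul, smul_eq_mul, mul_comm]

theorem stmt7 (m d : ℕ) (hm : 0 < m) (hd : 0 < d) [Fintype (GaloisField 2 m)]
    (G : Polynomial (GaloisField 2 m))
    (hdeg : ∀ i, G.coeff i ≠ 0 → ((Nat.digits 2 i).sum ≤ d))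
    (hdeg' : ∃ i, G.coeff i ≠ 0 ∧ (Nat.digits 2 i).sum = d)
    (v : GaloisField 2 m) :
    (2 : ℤ) ^ ((m + d - 1) / d) ∣
      ∑ x : GaloisField 2 m,
        (-1 : ℤ) ^ (Algebra.trace (ZMod 2) (GaloisField 2 m) (G.eval x) +
          Algebra.trace (ZMod 2) (GaloisField 2 m) (v * x)).val := by
  classical
  set H : Polynomial (GaloisField 2 m) := G + Polynomial.C v * Polynomial.X with hH
  have hHdeg : ∀ i, H.coeff i ≠ 0 → (Nat.digits 2 i).sum ≤ d := by
    intro i hi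
    by_cases h1 : i = 1
    · subst h1; simpa using (show 1 ≤ d from hd)
    · apply hdeg
      simpa [hH, Polynomial.coeff_add, Polynomial.coeff_C_mul, Polynomial.coeff_X,
        Ne.symm h1] using hi
  have hfr : Module.finrank (ZMod 2) (GaloisField 2 m) = m := GaloisField.finrank 2 hm.ne'
  let B : Module.Basis (Fin m) (ZMod 2) (GaloisField 2 m) := Module.finBasisOfFinrankEq (ZMod 2) (GaloisField 2 m) hfr
  have hrep := KRep_eval hd (fun j => B j) H hHdeg
  obtain ⟨n, T, w, hT, hval⟩ := mm_trace_rep hrep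
  have htransport :
      ∑ x : (GaloisField 2 m), (-1 : ℤ) ^ (Algebra.trace (ZMod 2) (GaloisField 2 m) (G.eval x) +
          Algebra.trace (ZMod 2) (GaloisField 2 m) (v * x)).val
        = ∑ c : Fin m → ZMod 2, (-1 : ℤ) ^ (∑ t, w t * ∏ j ∈ T t, c j).val := by
    rw [← Equiv.sum_comp B.equivFun.symm.toEquiv
      (fun x => (-1 : ℤ) ^ (Algebra.trace (ZMod 2) (GaloisField 2 m) (G.eval x) +
          Algebra.trace (ZMod 2) (GaloisField 2 m) (v * x)).val)]
    refine Finset.sum_congr rfl fun c _ => ?_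
    congr 1
    have hx : (B.equivFun.symm.toEquiv c : GaloisField 2 m)
        = ∑ j, algebraMap (ZMod 2) (GaloisField 2 m) (c j) * B j := by
      rw [LinearEquiv.coe_toEquiv, Module.Basis.equivFun_symm_apply]
      exact Finset.sum_congr rfl fun j _ => Algebra.smul_def _ _
    rw [← map_add, hx]
    have := hval c
    rw [← this]
    congr 1
    rw [hH]
    simp [Polynomial.eval_add, Polynomial.eval_mul]
  rw [htransport]
  exact mm_key m d hm hd T w hT
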